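/- arXiv:1711.00172 — 3 statements merged into one kernel-verified Lean document; each statement's English description precedes it below -/
import Mathlib

section
/- Let T_l = { u·4^l + Σ_{i=0}^{l-1} v_i·4^i : u ∈ {1,2,3,4}, v_i ∈ {1,2} for 0 ≤ i ≤ l−1 } for each integer l ≥ 0, and let A = ⋃_{l≥0} T_l. Then limsup_{n→∞} A(n)/√n = √15, where A(n) denotes the number of elements of A that are at most n. -/
/-- `T l` is the set of integers `u·4^l + ∑_{i<l} v_i·4^i` with `u ∈ {1,2,3,4}`
and `v_i ∈ {1,2}` for `0 ≤ i ≤ l-1`. -/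
def T (l : ℕ) : Set ℕ :=
  {n | ∃ u : ℕ, (1 ≤ u ∧ u ≤ 4) ∧ ∃ v : ℕ → ℕ, (∀ i, i < l → v i = 1 ∨ v i = 2) ∧
    n = u * 4 ^ l + ∑ i ∈ Finset.range l, v i * 4 ^ i}

/-- `A = ⋃_{l ≥ 0} T_l`. -/
def A : Set ℕ := ⋃ l : ℕ, T l

/-- The counting function of a set `S` of nonnegative integers:
the number of elements of `S` that are at most `n`. -/
noncomputable def cnt (S : Set ℕ) (n : ℕ) : ℕ := (S ∩ Set.Iic n).ncard

/-- `S` is an `AP₃`-covering sequence if there is `n₀` such that every `n > n₀`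
is the last term of a 3-term arithmetic progression whose first two terms lie in `S`. -/
def AP3Covering (S : Set ℕ) : Prop :=
  ∃ n₀ : ℕ, ∀ n : ℕ, n₀ < n → ∃ a ∈ S, ∃ b ∈ S, a < b ∧ b < n ∧ a + n = 2 * b

def gg (l : ℕ) : ℕ := ∑ i ∈ Finset.range l, 4 ^ i

lemma gg_succ (l : ℕ) : gg (l+1) = 4 * gg l + 1 := by
  unfold gg
  rw [Finset.sum_range_succ']
  simp [Finset.mul_sum, pow_succ, mul_comm]

lemma three_gg (l : ℕ) : 3 * gg l + 1 = 4 ^ l := by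
  induction l with
  | zero => simp [gg]
  | succ n ih => rw [gg_succ, pow_succ]; omega

def enc (k : ℕ) : ℕ :=
  if k = 0 then 0 else 4 * enc (k / 2) + k % 2
  decreasing_by exact Nat.div_lt_self (Nat.pos_of_ne_zero (by assumption)) (by norm_num)

lemma enc_zero : enc 0 = 0 := by unfold enc; simp

lemma enc_rec (k : ℕ) : enc k = 4 * enc (k / 2) + k % 2 := by
  rcases eq_or_ne k 0 with rfl | h
  · simp [enc_zero]
  · rw [enc]; simp [h]

lemma enc_strictMono : StrictMono enc := by
  have key : ∀ m, ∀ k < m, enc k < enc m := by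
    intro m
    induction m using Nat.strong_induction_on with
    | _ m ih =>
      intro k hk
      rcases Nat.lt_or_ge (k / 2) (m / 2) with h | h
      · have h2 : m / 2 < m := Nat.div_lt_self (by omega) (by norm_num)
        have := ih (m / 2) h2 (k / 2) h
        have hk2 : k % 2 ≤ 1 := by omega
        rw [enc_rec k, enc_rec m]
        omega
      · have heq : k / 2 = m / 2 := by
          have := Nat.div_le_div_right (c := 2) (le_of_lt hk)
          omega
        have : k % 2 < m % 2 := by omega
        rw [enc_rec k, enc_rec m, heq]
        omega
  exact fun k m h => key m k h

lemma enc_le_gg {l k : ℕ} (h : k < 2 ^ l) : enc k ≤ gg l := by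
  induction l generalizing k with
  | zero => interval_cases k; simp [enc_zero]
  | succ n ih =>
    have h1 : k / 2 < 2 ^ n := by
      have : k < 2 ^ n * 2 := by rw [← pow_succ]; exact h
      omega
    have := ih h1
    rw [enc_rec k, gg_succ]
    omega

lemma enc_pow_sub_one (l : ℕ) : enc (2 ^ l - 1) = gg l := by
  induction l with
  | zero => simp [enc_zero, gg]
  | succ n ih =>
    have h2 : (2:ℕ) ^ n ≥ 1 := Nat.one_le_two_pow
    have h3 : (2:ℕ) ^ (n+1) = 2 * 2 ^ n := by ring
    have hd : (2 ^ (n+1) - 1) / 2 = 2 ^ n - 1 := by omega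
    have hm : (2 ^ (n+1) - 1) % 2 = 1 := by omega
    rw [enc_rec, hd, hm, ih, gg_succ]

lemma enc_lb (k : ℕ) : k * k + 2 * k ≤ 3 * enc k := by
  induction k using Nat.strong_induction_on with
  | _ k ih =>
    rcases eq_or_ne k 0 with rfl | h
    · simp [enc_zero]
    · have hlt : k / 2 < k := Nat.div_lt_self (by omega) (by norm_num)
      have := ih (k / 2) hlt
      rw [enc_rec k]
      have hk : k = 2 * (k / 2) + k % 2 := by omega
      rcases Nat.mod_two_eq_zero_or_one k with h2 | h2 <;>
        · rw [h2] at hk ⊢; nlinarith [this]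

lemma sum_two_pow (l : ℕ) : ∑ i ∈ Finset.range l, 2 ^ i = 2 ^ l - 1 := by
  induction l with
  | zero => simp
  | succ n ih =>
    rw [Finset.sum_range_succ, ih]
    have : (1:ℕ) ≤ 2 ^ n := Nat.one_le_two_pow
    have : (2:ℕ) ^ (n+1) = 2 * 2 ^ n := by ring
    omega

lemma encSum2 (l : ℕ) (b : ℕ → ℕ) (hb : ∀ i < l, b i ≤ 1) :
    enc (∑ i ∈ Finset.range l, b i * 2 ^ i) = ∑ i ∈ Finset.range l, b i * 4 ^ i := by
  induction l generalizing b with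
  | zero => simp [enc_zero]
  | succ n ih =>
    rw [Finset.sum_range_succ' (fun i => b i * 2 ^ i), Finset.sum_range_succ' (fun i => b i * 4 ^ i)]
    have e2 : ∑ i ∈ Finset.range n, b (i+1) * 2 ^ (i+1)
        = 2 * ∑ i ∈ Finset.range n, b (i+1) * 2 ^ i := by
      rw [Finset.mul_sum]; congr 1; ext i; ring
    have e4 : ∑ i ∈ Finset.range n, b (i+1) * 4 ^ (i+1)
        = 4 * ∑ i ∈ Finset.range n, b (i+1) * 4 ^ i := by
      rw [Finset.mul_sum]; congr 1; ext i; ring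
    rw [e2, e4]
    set s := ∑ i ∈ Finset.range n, b (i+1) * 2 ^ i with hs
    have hb0 : b 0 ≤ 1 := hb 0 (by omega)
    have hdiv : (2 * s + b 0 * 2 ^ 0) / 2 = s := by simp; omega
    have hmod : (2 * s + b 0 * 2 ^ 0) % 2 = b 0 := by simp; omega
    rw [enc_rec, hdiv, hmod, ih (fun i => b (i+1)) (fun i hi => hb (i+1) (by omega))]
    simp

lemma sum_bits (l : ℕ) (r : ℕ) (h : r < 2 ^ l) :
    ∑ i ∈ Finset.range l, (r / 2 ^ i % 2) * 2 ^ i = r := by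
  induction l generalizing r with
  | zero => simp at h ⊢; omega
  | succ n ih =>
    rw [Finset.sum_range_succ' (fun i => (r / 2 ^ i % 2) * 2 ^ i)]
    have e2 : ∑ i ∈ Finset.range n, (r / 2 ^ (i+1) % 2) * 2 ^ (i+1)
        = 2 * ∑ i ∈ Finset.range n, ((r / 2) / 2 ^ i % 2) * 2 ^ i := by
      rw [Finset.mul_sum]; congr 1; ext i
      rw [pow_succ']
      rw [Nat.div_div_eq_div_mul]
      ring_nf
    have hr2 : r / 2 < 2 ^ n := by
      have : r < 2 ^ n * 2 := by rw [← pow_succ]; exact h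
      omega
    rw [e2, ih (r / 2) hr2]
    simp
    omega

def cc (l : ℕ) : ℕ := 4 * 2 ^ l - 4
def LL (m : ℕ) : ℕ := Nat.log 2 (m + 4) - 2
def val (l k : ℕ) : ℕ := (k / 2 ^ l + 1) * 4 ^ l + gg l + enc (k % 2 ^ l)
def a (m : ℕ) : ℕ := val (LL m) (m - cc (LL m))

lemma four_pow (l : ℕ) : (4:ℕ) ^ l = 2 ^ l * 2 ^ l := by
  rw [← Nat.mul_pow]

lemma pow_l2 (l : ℕ) : (2:ℕ) ^ (l + 2) = 4 * 2 ^ l := by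
  rw [pow_add]; ring

lemma pow_l3 (l : ℕ) : (2:ℕ) ^ (l + 3) = 8 * 2 ^ l := by
  rw [pow_add]; ring

lemma LL_spec {l k : ℕ} (hk : k < 4 * 2 ^ l) : LL (cc l + k) = l := by
  have h1 : (1:ℕ) ≤ 2 ^ l := Nat.one_le_two_pow
  have hc : cc l + k + 4 = 4 * 2 ^ l + k := by unfold cc; omega
  have hlog : Nat.log 2 (cc l + k + 4) = l + 2 := by
    apply Nat.log_eq_of_pow_le_of_lt_pow
    · rw [hc]
      have := pow_l2 l
      omega
    · rw [hc]
      have := pow_l2 l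
      have := pow_l3 l
      omega
  unfold LL
  omega

lemma decomp (m : ℕ) : cc (LL m) ≤ m ∧ m - cc (LL m) < 4 * 2 ^ (LL m) := by
  have h4 : m + 4 ≠ 0 := by omega
  have hge : 2 ≤ Nat.log 2 (m + 4) := by
    rw [Nat.le_log_iff_pow_le (by norm_num) h4]; omega
  have hlog : Nat.log 2 (m + 4) = LL m + 2 := by unfold LL; omega
  have hle : 2 ^ (LL m + 2) ≤ m + 4 := by
    rw [← hlog]; exact Nat.pow_log_le_self 2 h4
  have hlt : m + 4 < 2 ^ (LL m + 2 + 1) := by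
    rw [← hlog]; exact Nat.lt_pow_succ_log_self (by norm_num) _
  have e1 := pow_l2 (LL m)
  have e2 : (2:ℕ) ^ (LL m + 2 + 1) = 8 * 2 ^ LL m := pow_l3 (LL m)
  unfold cc
  omega

lemma val_mem_T {l k : ℕ} (hk : k < 4 * 2 ^ l) : val l k ∈ T l := by
  have h1 : (1:ℕ) ≤ 2 ^ l := Nat.one_le_two_pow
  obtain ⟨q, hqdef⟩ : ∃ q, k / 2 ^ l = q := ⟨_, rfl⟩
  obtain ⟨r, hrdef⟩ : ∃ r, k % 2 ^ l = r := ⟨_, rfl⟩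
  have hrlt : r < 2 ^ l := hrdef ▸ Nat.mod_lt _ (by omega)
  have hq : q < 4 := hqdef ▸ (Nat.div_lt_iff_lt_mul (by omega)).mpr (by omega)
  have hmod2 : ∀ i : ℕ, r / 2 ^ i % 2 < 2 := fun i => Nat.mod_lt _ (by norm_num)
  refine ⟨q + 1, ⟨by omega, by omega⟩, fun i => r / 2 ^ i % 2 + 1, ?_, ?_⟩
  · intro i _
    show r / 2 ^ i % 2 + 1 = 1 ∨ r / 2 ^ i % 2 + 1 = 2
    have := hmod2 i
    omega
  have hsum : ∑ i ∈ Finset.range l, (r / 2 ^ i % 2 + 1) * 4 ^ i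
      = (∑ i ∈ Finset.range l, (r / 2 ^ i % 2) * 4 ^ i) + gg l := by
    unfold gg; rw [← Finset.sum_add_distrib]; congr 1; ext i; ring
  rw [hsum, ← encSum2 l _ (fun i _ => by have := hmod2 i; omega), sum_bits l r hrlt]
  show val l k = (q + 1) * 4 ^ l + (enc r + gg l)
  simp only [val, hqdef, hrdef]
  ring

lemma mem_T_val {l n : ℕ} (hn : n ∈ T l) : ∃ k, k < 4 * 2 ^ l ∧ n = val l k := by
  obtain ⟨u, ⟨hu1, hu4⟩, v, hv, rfl⟩ := hn
  have h1 : (1:ℕ) ≤ 2 ^ l := Nat.one_le_two_pow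
  set b : ℕ → ℕ := fun i => v i - 1 with hb
  have hble : ∀ i < l, b i ≤ 1 := fun i hi => by rcases hv i hi with h | h <;> simp [hb, h]
  set r := ∑ i ∈ Finset.range l, b i * 2 ^ i with hrdef
  have hrlt : r < 2 ^ l := by
    have hle1 : r ≤ ∑ i ∈ Finset.range l, 2 ^ i := by
      apply Finset.sum_le_sum
      intro i hi
      have := hble i (Finset.mem_range.mp hi)
      calc b i * 2 ^ i ≤ 1 * 2 ^ i := Nat.mul_le_mul_right _ this
        _ = 2 ^ i := one_mul _
    rw [sum_two_pow] at hle1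
    omega
  have hklt : (u - 1) * 2 ^ l + r < 4 * 2 ^ l := by
    have h3 : (u - 1) * 2 ^ l ≤ 3 * 2 ^ l := Nat.mul_le_mul_right _ (by omega)
    omega
  refine ⟨(u - 1) * 2 ^ l + r, hklt, ?_⟩
  have hdiv : ((u - 1) * 2 ^ l + r) / 2 ^ l = u - 1 := by
    rw [Nat.mul_comm, Nat.add_comm, Nat.add_mul_div_left _ _ (by omega : 0 < 2 ^ l),
      Nat.div_eq_of_lt hrlt]
    omega
  have hmod : ((u - 1) * 2 ^ l + r) % 2 ^ l = r := by
    rw [Nat.mul_comm, Nat.add_comm, Nat.add_mul_mod_self_left, Nat.mod_eq_of_lt hrlt]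
  have hsum : ∑ i ∈ Finset.range l, v i * 4 ^ i
      = (∑ i ∈ Finset.range l, b i * 4 ^ i) + gg l := by
    unfold gg; rw [← Finset.sum_add_distrib]
    apply Finset.sum_congr rfl
    intro i hi
    have hv1 := hv i (Finset.mem_range.mp hi)
    have : v i = b i + 1 := by simp only [hb]; omega
    rw [this]; ring
  simp only [val, hdiv, hmod, hsum, ← encSum2 l b hble, ← hrdef]
  have hu : u - 1 + 1 = u := by omega
  rw [hu]
  ring

lemma gg_lt (l : ℕ) : gg l < 4 ^ l := by have := three_gg l; omega

lemma val_mono {l k k' : ℕ} (h : k < k') (h' : k' < 4 * 2 ^ l) : val l k < val l k' := by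
  have h1 : (1:ℕ) ≤ 2 ^ l := Nat.one_le_two_pow
  have hdm := Nat.div_add_mod k (2 ^ l)
  have hdm' := Nat.div_add_mod k' (2 ^ l)
  obtain ⟨q, hq⟩ : ∃ q, k / 2 ^ l = q := ⟨_, rfl⟩
  obtain ⟨r, hr⟩ : ∃ r, k % 2 ^ l = r := ⟨_, rfl⟩
  obtain ⟨q', hq'⟩ : ∃ q, k' / 2 ^ l = q := ⟨_, rfl⟩
  obtain ⟨r', hr'⟩ : ∃ r, k' % 2 ^ l = r := ⟨_, rfl⟩
  rw [hq, hr] at hdm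
  rw [hq', hr'] at hdm'
  have hrlt : r < 2 ^ l := hr ▸ Nat.mod_lt _ (by omega)
  have hrlt' : r' < 2 ^ l := hr' ▸ Nat.mod_lt _ (by omega)
  have hqq : q ≤ q' := by
    rw [← hq, ← hq']; exact Nat.div_le_div_right (le_of_lt h)
  simp only [val, hq, hr, hq', hr']
  rcases eq_or_lt_of_le hqq with rfl | hlt
  · have hrr : r < r' := by omega
    have := enc_strictMono hrr
    omega
  · have he1 : enc r ≤ gg l := enc_le_gg hrlt
    have he2 : (q + 2) * 4 ^ l ≤ (q' + 1) * 4 ^ l := Nat.mul_le_mul_right _ (by omega)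
    have he3 : (q + 2) * 4 ^ l = (q + 1) * 4 ^ l + 4 ^ l := by ring
    have := gg_lt l
    omega

lemma a_strictMono : StrictMono a := by
  apply strictMono_nat_of_lt_succ
  intro m
  obtain ⟨hle, hlt⟩ := decomp m
  set l := LL m with hldef
  set k := m - cc l with hkdef
  have hm : m = cc l + k := by omega
  have h1 : (1:ℕ) ≤ 2 ^ l := Nat.one_le_two_pow
  rcases Nat.lt_or_ge (k + 1) (4 * 2 ^ l) with hcase | hcase
  · have hL : LL (m + 1) = l := by
      have : m + 1 = cc l + (k + 1) := by omega
      rw [this]; exact LL_spec hcase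
    have ha : a (m + 1) = val l (k + 1) := by
      unfold a; rw [hL]
      congr 1
      unfold cc at *
      omega
    have ha' : a m = val l k := by unfold a; rw [← hldef, ← hkdef]
    rw [ha, ha']
    exact val_mono (by omega) hcase
  · have hk4 : k = 4 * 2 ^ l - 1 := by omega
    have hcc : cc (l + 1) = m + 1 := by
      unfold cc at *
      have : (2:ℕ) ^ (l+1) = 2 * 2 ^ l := by ring
      omega
    have hL : LL (m + 1) = l + 1 := by
      have : m + 1 = cc (l+1) + 0 := by omega
      rw [this]; exact LL_spec (by positivity)
    have ha : a (m + 1) = val (l + 1) 0 := by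
      unfold a; rw [hL]; congr 1; omega
    have ha' : a m = val l k := by unfold a; rw [← hldef, ← hkdef]
    rw [ha, ha']
    have hv1 : val (l+1) 0 = 4 ^ (l+1) + gg (l+1) := by
      unfold val
      simp [enc_zero]
    have hkd : k = 2 ^ l * 3 + (2 ^ l - 1) := by
      rw [hk4]; omega
    have hdiv : k / 2 ^ l = 3 := by
      rw [hkd, Nat.mul_add_div (by omega), Nat.div_eq_of_lt (by omega)]
    have hmod : k % 2 ^ l = 2 ^ l - 1 := by
      rw [hkd, Nat.mul_add_mod, Nat.mod_eq_of_lt (by omega)]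
    have hv2 : val l k = 4 * 4 ^ l + gg l + gg l := by
      unfold val
      rw [hdiv, hmod, enc_pow_sub_one]
    rw [hv1, hv2, gg_succ, pow_succ]
    omega

lemma a_le (m : ℕ) : m ≤ a m := a_strictMono.le_apply

lemma A_eq_range : A = Set.range a := by
  ext n
  constructor
  · intro hn
    obtain ⟨l, hl⟩ := Set.mem_iUnion.mp hn
    obtain ⟨k, hk, rfl⟩ := mem_T_val hl
    refine ⟨cc l + k, ?_⟩
    unfold a
    rw [LL_spec hk]
    congr 1
    omega
  · rintro ⟨m, rfl⟩
    obtain ⟨hle, hlt⟩ := decomp m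
    exact Set.mem_iUnion.mpr ⟨LL m, val_mem_T hlt⟩

lemma core_ineq (x r G E q : ℤ) (hx : 1 ≤ x) (hr : 0 ≤ r) (hrx : r < x)
    (hq0 : 0 ≤ q) (hq : q ≤ 3) (hG : 3 * G + 1 = x * x) (hE : r * r + 2 * r ≤ 3 * E) :
    (4 * x + (x * q + r)) ^ 2 ≤ 15 * ((q + 1) * (x * x) + G + E) + 6 := by
  have h7 : 0 ≤ (7 - q) * x - 2 * r := by nlinarith
  have hprod : 0 ≤ q * (x * ((7 - q) * x - 2 * r)) :=
    mul_nonneg hq0 (mul_nonneg (by linarith) h7)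
  nlinarith [sq_nonneg (x - r), hprod, hE, hG]

lemma main_ineq (m : ℕ) : (m + 4) ^ 2 ≤ 15 * a m + 6 := by
  obtain ⟨hle, hlt⟩ := decomp m
  set l := LL m with hldef
  set k := m - cc l with hkdef
  have ha : a m = val l k := by unfold a; rw [← hldef, ← hkdef]
  have h1 : (1:ℕ) ≤ 2 ^ l := Nat.one_le_two_pow
  have hdm := Nat.div_add_mod k (2 ^ l)
  obtain ⟨q, hq⟩ : ∃ q, k / 2 ^ l = q := ⟨_, rfl⟩
  obtain ⟨r, hr⟩ : ∃ r, k % 2 ^ l = r := ⟨_, rfl⟩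
  rw [hq, hr] at hdm
  have hrlt : r < 2 ^ l := hr ▸ Nat.mod_lt _ (by omega)
  have hq3 : q < 4 := hq ▸ (Nat.div_lt_iff_lt_mul (by omega)).mpr (by omega)
  have hval : val l k = (q + 1) * 4 ^ l + gg l + enc r := by
    unfold val; rw [hq, hr]
  have hm4 : m + 4 = 4 * 2 ^ l + (2 ^ l * q + r) := by
    unfold cc at hle hkdef
    omega
  rw [ha, hval, hm4]
  obtain ⟨x, hx⟩ : ∃ x, 2 ^ l = x := ⟨_, rfl⟩
  obtain ⟨G, hG⟩ : ∃ G, gg l = G := ⟨_, rfl⟩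
  obtain ⟨E, hE⟩ : ∃ E, enc r = E := ⟨_, rfl⟩
  have hGx : 3 * G + 1 = x * x := by rw [← hG, ← hx]; rw [three_gg l, four_pow]
  have hEr : r * r + 2 * r ≤ 3 * E := hE ▸ enc_lb r
  have h4l : (4:ℕ) ^ l = x * x := by rw [← hx, four_pow]
  rw [hx, hG, hE, h4l]
  have hrx : r < x := hx ▸ hrlt
  have hx1 : 1 ≤ x := hx ▸ h1
  zify
  zify at hGx hEr hrx hx1
  exact core_ineq x r G E q (by exact_mod_cast hx1) (by positivity) hrx (by positivity)
    (by exact_mod_cast Nat.lt_succ_iff.mp (by exact_mod_cast hq3)) hGx hEr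

lemma a_special (l : ℕ) : a (cc l + (2 ^ l - 1)) = 4 ^ l + 2 * gg l := by
  have h1 : (1:ℕ) ≤ 2 ^ l := Nat.one_le_two_pow
  have hk : 2 ^ l - 1 < 4 * 2 ^ l := by omega
  unfold a
  rw [LL_spec hk]
  have : cc l + (2 ^ l - 1) - cc l = 2 ^ l - 1 := by omega
  rw [this]
  unfold val
  rw [Nat.div_eq_of_lt (by omega), Nat.mod_eq_of_lt (by omega), enc_pow_sub_one]
  omega

lemma Mfin (n : ℕ) : {m | a m ≤ n}.Finite :=
  (Set.finite_Iic n).subset (fun m hm => le_trans (a_le m) hm)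

lemma cnt_eq (n : ℕ) : cnt A n = {m | a m ≤ n}.ncard := by
  have himg : A ∩ Set.Iic n = a '' {m | a m ≤ n} := by
    rw [A_eq_range]
    ext x
    constructor
    · rintro ⟨⟨m, rfl⟩, hx⟩
      exact ⟨m, hx, rfl⟩
    · rintro ⟨m, hm, rfl⟩
      exact ⟨⟨m, rfl⟩, hm⟩
  rw [cnt, himg, Set.ncard_image_of_injective _ a_strictMono.injective]

lemma cnt_lower (l : ℕ) : 5 * 2 ^ l - 4 ≤ cnt A (4 ^ l + 2 * gg l) := by
  have h1 : (1:ℕ) ≤ 2 ^ l := Nat.one_le_two_pow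
  rw [cnt_eq]
  have hsub : Set.Iic (cc l + (2 ^ l - 1)) ⊆ {m | a m ≤ 4 ^ l + 2 * gg l} := by
    intro m hm
    have := a_strictMono.monotone (Set.mem_Iic.mp hm)
    rw [a_special l] at this
    exact this
  have hcard : (Set.Iic (cc l + (2 ^ l - 1))).ncard = cc l + (2 ^ l - 1) + 1 := by
    rw [← Finset.coe_Iic, Set.ncard_coe_finset, Nat.card_Iic]
  have := Set.ncard_le_ncard hsub (Mfin _)
  rw [hcard] at this
  unfold cc at this
  omega

lemma cnt_upper {n : ℕ} (hn : 1 ≤ n) : (cnt A n + 3) ^ 2 ≤ 15 * n + 6 := by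
  rcases Nat.eq_zero_or_pos (cnt A n) with h0 | hpos
  · rw [h0]; omega
  · rw [cnt_eq] at hpos ⊢
    have hne : {m | a m ≤ n}.Nonempty := Set.nonempty_of_ncard_ne_zero (by omega)
    have hFne : ((Mfin n).toFinset).Nonempty := by
      rwa [Set.Finite.toFinset_nonempty]
    obtain ⟨M, hMmem0, hMmax0⟩ :
        ∃ M ∈ (Mfin n).toFinset, ∀ m ∈ (Mfin n).toFinset, m ≤ M :=
      ⟨_, Finset.max'_mem _ hFne, fun m hm => Finset.le_max' _ m hm⟩
    have hMmem : a M ≤ n := (Mfin n).mem_toFinset.mp hMmem0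
    have hsub : {m | a m ≤ n} ⊆ Set.Iic M := by
      intro m hm
      exact hMmax0 m ((Mfin n).mem_toFinset.mpr hm)
    have hcard : (Set.Iic M).ncard = M + 1 := by
      rw [← Finset.coe_Iic, Set.ncard_coe_finset, Nat.card_Iic]
    have hle : {m | a m ≤ n}.ncard ≤ M + 1 := by
      have := Set.ncard_le_ncard hsub (Set.finite_Iic M)
      omega
    calc ({m | a m ≤ n}.ncard + 3) ^ 2 ≤ (M + 4) ^ 2 := Nat.pow_le_pow_left (by omega) 2
      _ ≤ 15 * a M + 6 := main_ineq M
      _ ≤ 15 * n + 6 := by omega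

noncomputable def f : ℕ → ℝ := fun n => (cnt A n : ℝ) / Real.sqrt n

lemma R1 {n : ℕ} (hn : 1 ≤ n) : f n ≤ Real.sqrt 15 + Real.sqrt 6 / Real.sqrt n := by
  have hsn : 0 < Real.sqrt n := Real.sqrt_pos.mpr (by exact_mod_cast hn)
  have h2 : ((cnt A n : ℝ) + 3) ^ 2 ≤ 15 * n + 6 := by
    have := cnt_upper hn
    push_cast at this ⊢
    exact_mod_cast this
  have hc : (cnt A n : ℝ) ≤ Real.sqrt (15 * n + 6) := by
    have h3 : ((cnt A n : ℝ) + 3) ≤ Real.sqrt (15 * n + 6) :=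
      (Real.le_sqrt (by positivity) (by positivity)).mpr h2
    linarith
  have hsplit : Real.sqrt (15 * n + 6) ≤ Real.sqrt (15 * n) + Real.sqrt 6 := by
    have h4 : (15 * n + 6 : ℝ) ≤ (Real.sqrt (15 * n) + Real.sqrt 6) ^ 2 := by
      nlinarith [Real.sq_sqrt (by positivity : (0:ℝ) ≤ 15 * n),
        Real.sq_sqrt (by norm_num : (0:ℝ) ≤ 6),
        Real.sqrt_nonneg (15 * (n:ℝ)), Real.sqrt_nonneg (6:ℝ)]
    calc Real.sqrt (15 * n + 6) ≤ Real.sqrt ((Real.sqrt (15 * n) + Real.sqrt 6) ^ 2) :=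
          Real.sqrt_le_sqrt h4
      _ = Real.sqrt (15 * n) + Real.sqrt 6 := Real.sqrt_sq (by positivity)
  have hmul : Real.sqrt (15 * n) = Real.sqrt 15 * Real.sqrt n :=
    Real.sqrt_mul (by norm_num) _
  rw [f, div_le_iff₀ hsn]
  have hexp : (Real.sqrt 15 + Real.sqrt 6 / Real.sqrt n) * Real.sqrt n
      = Real.sqrt 15 * Real.sqrt n + Real.sqrt 6 := by
    field_simp
  rw [hexp, ← hmul]
  linarith

lemma R2 (n : ℕ) : f n ≤ Real.sqrt 15 + Real.sqrt 6 := by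
  rcases Nat.eq_zero_or_pos n with rfl | hn
  · simp [f]
    positivity
  · have h1 : (1:ℝ) ≤ Real.sqrt n := by
      rw [show (1:ℝ) = Real.sqrt 1 by simp]
      exact Real.sqrt_le_sqrt (by exact_mod_cast hn)
    have := R1 hn
    have h2 : Real.sqrt 6 / Real.sqrt n ≤ Real.sqrt 6 :=
      div_le_self (Real.sqrt_nonneg 6) h1
    linarith

lemma R3 (l : ℕ) : Real.sqrt 15 - 4 / 2 ^ l ≤ f (4 ^ l + 2 * gg l) := by
  have h1 : (1:ℕ) ≤ 2 ^ l := Nat.one_le_two_pow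
  set n : ℕ := 4 ^ l + 2 * gg l with hn
  have hn1 : 1 ≤ n := by
    have : (1:ℕ) ≤ 4 ^ l := Nat.one_le_pow _ _ (by norm_num)
    omega
  have hsn : 0 < Real.sqrt n := Real.sqrt_pos.mpr (by exact_mod_cast hn1)
  have hnR : (n : ℝ) ≤ 5 / 3 * 4 ^ l := by
    have h3 : 3 * n + 2 = 5 * 4 ^ l := by
      have := three_gg l
      omega
    have : (3 : ℝ) * n + 2 = 5 * 4 ^ l := by exact_mod_cast h3
    linarith
  set t : ℝ := Real.sqrt (5 / 3) with ht
  have ht1 : 1 ≤ t := by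
    rw [ht, show (1:ℝ) = Real.sqrt 1 by simp]
    exact Real.sqrt_le_sqrt (by norm_num)
  have ht15 : Real.sqrt 15 * t = 5 := by
    rw [ht, ← Real.sqrt_mul (by norm_num : (0:ℝ) ≤ 15)]
    rw [show (15 : ℝ) * (5 / 3) = 25 by norm_num]
    rw [show (25 : ℝ) = 5 ^ 2 by norm_num, Real.sqrt_sq (by norm_num)]
  have hp : (0:ℝ) < 2 ^ l := by positivity
  have hsqn : Real.sqrt n ≤ t * 2 ^ l := by
    have h4 : ((4:ℝ)) ^ l = ((2:ℝ) ^ l) ^ 2 := by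
      rw [← pow_mul, mul_comm, pow_mul]
      norm_num
    calc Real.sqrt n ≤ Real.sqrt (5 / 3 * 4 ^ l) := Real.sqrt_le_sqrt hnR
      _ = t * Real.sqrt (4 ^ l) := Real.sqrt_mul (by norm_num) _
      _ = t * 2 ^ l := by rw [h4, Real.sqrt_sq (le_of_lt hp)]
  have hcnt : (5 * 2 ^ l - 4 : ℝ) ≤ (cnt A n : ℝ) := by
    have h5 := cnt_lower l
    have h6 : (5 * 2 ^ l : ℕ) - (4:ℕ) ≤ cnt A n := h5
    have h7 : ((5 * 2 ^ l - 4 : ℕ) : ℝ) ≤ (cnt A n : ℝ) := by exact_mod_cast h6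
    rw [Nat.cast_sub (by omega)] at h7
    push_cast at h7 ⊢
    linarith
  rcases le_or_gt (Real.sqrt 15 - 4 / 2 ^ l) 0 with hs | hs
  · have : 0 ≤ f n := by
      rw [f]
      positivity
    linarith
  · rw [f, le_div_iff₀ hsn]
    have step1 : (Real.sqrt 15 - 4 / 2 ^ l) * Real.sqrt n
        ≤ (Real.sqrt 15 - 4 / 2 ^ l) * (t * 2 ^ l) :=
      mul_le_mul_of_nonneg_left hsqn (le_of_lt hs)
    have step2 : (Real.sqrt 15 - 4 / 2 ^ l) * (t * 2 ^ l) = 5 * 2 ^ l - 4 * t := by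
      field_simp
      linear_combination (2:ℝ) ^ l * ht15
    have step3 : (5 : ℝ) * 2 ^ l - 4 * t ≤ 5 * 2 ^ l - 4 := by linarith
    linarith

theorem stmt_2 :
    Filter.limsup (fun n : ℕ => (cnt A n : ℝ) / Real.sqrt n) Filter.atTop
      = Real.sqrt 15 := by
  have hco : Filter.IsCoboundedUnder (· ≤ ·) Filter.atTop f :=
    Filter.isCoboundedUnder_le_of_le Filter.atTop
      (fun n => div_nonneg (Nat.cast_nonneg _) (Real.sqrt_nonneg _))
  have hbd : Filter.IsBoundedUnder (· ≤ ·) Filter.atTop f :=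
    ⟨Real.sqrt 15 + Real.sqrt 6, by
      rw [Filter.eventually_map]
      exact Filter.Eventually.of_forall R2⟩
  have hchange : (fun n : ℕ => (cnt A n : ℝ) / Real.sqrt n) = f := rfl
  rw [hchange]
  apply le_antisymm
  · -- limsup ≤ √15
    have key : ∀ ε : ℝ, 0 < ε → Filter.limsup f Filter.atTop ≤ Real.sqrt 15 + ε := by
      intro ε hε
      apply Filter.limsup_le_of_le hco
      set N : ℕ := ⌈(Real.sqrt 6 / ε) ^ 2⌉₊ with hN
      rw [Filter.eventually_atTop]
      refine ⟨max 1 N, fun n hn => ?_⟩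
      have hn1 : 1 ≤ n := le_trans (le_max_left _ _) hn
      have hnN : N ≤ n := le_trans (le_max_right _ _) hn
      have hsn : 0 < Real.sqrt n := Real.sqrt_pos.mpr (by exact_mod_cast hn1)
      have h6 : Real.sqrt 6 / Real.sqrt n ≤ ε := by
        have hNle : ((Real.sqrt 6 / ε) ^ 2 : ℝ) ≤ N := Nat.le_ceil _
        have hNn : (N : ℝ) ≤ n := by exact_mod_cast hnN
        have h7 : Real.sqrt 6 / ε ≤ Real.sqrt n := by
          rw [show Real.sqrt 6 / ε = Real.sqrt ((Real.sqrt 6 / ε) ^ 2) by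
            rw [Real.sqrt_sq (by positivity)]]
          exact Real.sqrt_le_sqrt (by linarith)
        rw [div_le_iff₀ hsn]
        calc Real.sqrt 6 = Real.sqrt 6 / ε * ε := by field_simp
          _ ≤ Real.sqrt n * ε := by
              apply mul_le_mul_of_nonneg_right h7 (le_of_lt hε)
          _ = ε * Real.sqrt n := by ring
      have := R1 hn1
      linarith
    by_contra hlt
    push_neg at hlt
    have := key ((Filter.limsup f Filter.atTop - Real.sqrt 15) / 2) (by linarith)
    linarith
  · -- √15 ≤ limsup
    have key : ∀ ε : ℝ, 0 < ε → Real.sqrt 15 - ε ≤ Filter.limsup f Filter.atTop := by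
      intro ε hε
      apply Filter.le_limsup_of_frequently_le _ hbd
      rw [Filter.frequently_atTop]
      intro N
      obtain ⟨l0, hl0⟩ := pow_unbounded_of_one_lt (R := ℝ) (4 / ε) one_lt_two
      set l : ℕ := l0 + N + 1 with hl
      refine ⟨4 ^ l + 2 * gg l, ?_, ?_⟩
      · have h1 : N < 2 ^ l := by
          calc N < l := by omega
            _ < 2 ^ l := Nat.lt_two_pow_self
        have h2 : 2 ^ l ≤ 4 ^ l := Nat.pow_le_pow_left (by norm_num) l
        omega
      · have h3 : (4 : ℝ) / 2 ^ l ≤ ε := by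
          have hll : (2:ℝ) ^ l0 ≤ 2 ^ l := by
            apply pow_le_pow_right₀ (by norm_num)
            omega
          have h4 : 4 / ε < 2 ^ l := lt_of_lt_of_le hl0 hll
          rw [div_le_iff₀ (by positivity : (0:ℝ) < 2 ^ l)]
          rw [div_lt_iff₀ hε] at h4
          linarith
        have := R3 l
        linarith
    by_contra hlt
    push_neg at hlt
    have := key ((Real.sqrt 15 - Filter.limsup f Filter.atTop) / 2) (by linarith)
    linarith
end

section
/- Let T_l = { u·4^l + Σ_{i=0}^{l-1} v_i·4^i : u ∈ {1,2,3,4}, v_i ∈ {1,2} } and A = ⋃_{l≥0} T_l. Then for every m ∈ A, the number of elements of A that are at most m is strictly less than 4·√m. -/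
/-- spread bits: base-2 digits reinterpreted in base 4 -/
def sprd : ℕ → ℕ
  | 0 => 0
  | n + 1 => 4 * sprd ((n + 1) / 2) + (n + 1) % 2
decreasing_by exact Nat.div_lt_self (Nat.succ_pos n) (by norm_num)

lemma sprd_eq (n : ℕ) : sprd n = 4 * sprd (n / 2) + n % 2 := by
  cases n with
  | zero => simp [sprd]
  | succ k => rw [sprd]

lemma sprd_lt : ∀ n m : ℕ, m < n → sprd m < sprd n := by
  intro n
  induction n using Nat.strong_induction_on with
  | _ n ih =>
    intro m hmn
    rw [sprd_eq m, sprd_eq n]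
    rcases Nat.lt_or_ge (m / 2) (n / 2) with h | h
    · have hn0 : 0 < n := by omega
      have := ih (n / 2) (Nat.div_lt_self hn0 (by norm_num)) (m / 2) h
      omega
    · have h2 : m / 2 = n / 2 := by omega
      rw [h2]
      omega

lemma sprd_le {m n : ℕ} (h : m ≤ n) : sprd m ≤ sprd n := by
  rcases Nat.lt_or_ge m n with h' | h'
  · exact (sprd_lt n m h').le
  · have : m = n := by omega
    subst this; exact le_refl _

lemma sprd_lower : ∀ n : ℕ, (n + 1) ^ 2 ≤ 3 * sprd n + 1 := by
  intro n
  induction n using Nat.strong_induction_on with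
  | _ n ih =>
    rcases Nat.eq_zero_or_pos n with h | h
    · subst h; simp [sprd]
    · have hdiv : n / 2 < n := Nat.div_lt_self h (by norm_num)
      have H := ih (n / 2) hdiv
      rw [sprd_eq n]
      have h2 := Nat.div_add_mod n 2
      rcases Nat.mod_two_eq_zero_or_one n with hr | hr <;> rw [hr] <;> rw [hr] at h2 <;>
        nlinarith [H, h2]

lemma sum2 (l : ℕ) : ∑ i ∈ Finset.range l, 2 ^ i + 1 = 2 ^ l := by
  induction l with
  | zero => simp
  | succ n ih => rw [Finset.sum_range_succ, pow_succ]; omega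

lemma sum4 (l : ℕ) : 3 * ∑ i ∈ Finset.range l, 4 ^ i + 1 = 4 ^ l := by
  induction l with
  | zero => simp
  | succ n ih => rw [Finset.sum_range_succ, pow_succ]; omega

lemma sprd_bits : ∀ (l : ℕ) (w : ℕ → ℕ), (∀ i, i < l → w i ≤ 1) →
    sprd (∑ i ∈ Finset.range l, w i * 2 ^ i) = ∑ i ∈ Finset.range l, w i * 4 ^ i := by
  intro l
  induction l with
  | zero => intro w _; simp [sprd]
  | succ n ih =>
    intro w hw
    rw [Finset.sum_range_succ' (fun i => w i * 2 ^ i) n,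
        Finset.sum_range_succ' (fun i => w i * 4 ^ i) n]
    have e2 : ∑ i ∈ Finset.range n, w (i + 1) * 2 ^ (i + 1)
        = 2 * ∑ i ∈ Finset.range n, w (i + 1) * 2 ^ i := by
      rw [Finset.mul_sum]; exact Finset.sum_congr rfl fun i _ => by ring
    have e4 : ∑ i ∈ Finset.range n, w (i + 1) * 4 ^ (i + 1)
        = 4 * ∑ i ∈ Finset.range n, w (i + 1) * 4 ^ i := by
      rw [Finset.mul_sum]; exact Finset.sum_congr rfl fun i _ => by ring
    rw [e2, e4]
    set a := ∑ i ∈ Finset.range n, w (i + 1) * 2 ^ i with ha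
    have hw0 : w 0 ≤ 1 := hw 0 (by omega)
    rw [sprd_eq (2 * a + w 0 * 2 ^ 0)]
    have hq : (2 * a + w 0 * 2 ^ 0) / 2 = a := by simp [pow_zero]; omega
    have hr : (2 * a + w 0 * 2 ^ 0) % 2 = w 0 := by simp [pow_zero]; omega
    rw [hq, hr, ih (fun i => w (i + 1)) (fun i hi => hw (i + 1) (by omega))]
    simp [pow_zero]

noncomputable def blk (j U C : ℕ) : Finset ℕ :=
  Finset.image (fun p : ℕ × ℕ => (p.1 + 1) * 4 ^ j + ∑ i ∈ Finset.range j, 4 ^ i + sprd p.2)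
    (Finset.range U ×ˢ Finset.range C)

lemma blk_card (j U C : ℕ) : (blk j U C).card ≤ U * C := by
  unfold blk
  refine le_trans Finset.card_image_le ?_
  rw [Finset.card_product, Finset.card_range, Finset.card_range]

lemma blk_mem {j U C u c : ℕ} (h1 : 1 ≤ u) (hU : u ≤ U) (hC : c < C) :
    u * 4 ^ j + ∑ i ∈ Finset.range j, 4 ^ i + sprd c ∈ blk j U C := by
  unfold blk
  refine Finset.mem_image.mpr ⟨(u - 1, c), Finset.mem_product.mpr
    ⟨Finset.mem_range.mpr (by omega), Finset.mem_range.mpr hC⟩, ?_⟩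
  have : u - 1 + 1 = u := by omega
  simp only [this]

lemma T_elim {j x : ℕ} (hx : x ∈ T j) :
    ∃ u c, 1 ≤ u ∧ u ≤ 4 ∧ c + 1 ≤ 2 ^ j ∧
      x = u * 4 ^ j + ∑ i ∈ Finset.range j, 4 ^ i + sprd c := by
  obtain ⟨u, ⟨h1, h4⟩, v, hv, rfl⟩ := hx
  refine ⟨u, ∑ i ∈ Finset.range j, (v i - 1) * 2 ^ i, h1, h4, ?_, ?_⟩
  · have hle : ∑ i ∈ Finset.range j, (v i - 1) * 2 ^ i ≤ ∑ i ∈ Finset.range j, 2 ^ i := by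
      refine Finset.sum_le_sum fun i hi => ?_
      rcases hv i (Finset.mem_range.mp hi) with h | h <;> rw [h] <;> simp
    have := sum2 j
    omega
  · rw [sprd_bits j (fun i => v i - 1)
      (fun i hi => by show v i - 1 ≤ 1; rcases hv i hi with h | h <;> omega)]
    have hsplit : ∑ i ∈ Finset.range j, v i * 4 ^ i
        = ∑ i ∈ Finset.range j, 4 ^ i + ∑ i ∈ Finset.range j, (v i - 1) * 4 ^ i := by
      rw [← Finset.sum_add_distrib]
      refine Finset.sum_congr rfl fun i hi => ?_
      rcases hv i (Finset.mem_range.mp hi) with h | h <;> rw [h] <;> omega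
    omega

lemma T_subset_blk (j : ℕ) (x : ℕ) (hx : x ∈ T j) : x ∈ blk j 4 (2 ^ j) := by
  obtain ⟨u, c, h1, h4, hc, rfl⟩ := T_elim hx
  exact blk_mem h1 h4 (by omega)

lemma cnt_le_of (m l U C : ℕ)
    (htop : ∀ x ∈ T l, x ≤ m → x ∈ blk l U C)
    (hhigh : ∀ j, l < j → ∀ x ∈ T j, m < x) :
    cnt A m ≤ 4 * (2 ^ l - 1) + U * C := by
  classical
  set E : Finset ℕ := ((Finset.range l).biUnion (fun j => blk j 4 (2 ^ j))) ∪ blk l U C with hE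
  have hsub : A ∩ Set.Iic m ⊆ ↑E := by
    rintro x ⟨hxA, hxle⟩
    have hxle' : x ≤ m := hxle
    obtain ⟨j, hxj⟩ := Set.mem_iUnion.mp hxA
    simp only [hE, Finset.coe_union, Set.mem_union, Finset.coe_biUnion, Set.mem_iUnion,
      Finset.mem_coe, Finset.mem_range]
    rcases lt_trichotomy j l with h | h | h
    · exact Or.inl ⟨j, h, T_subset_blk j x hxj⟩
    · subst h; exact Or.inr (htop x hxj hxle')
    · exact absurd (hhigh j h x hxj) (not_lt.mpr hxle')
  have h1 : cnt A m ≤ E.card := by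
    have := Set.ncard_le_ncard hsub E.finite_toSet
    rwa [Set.ncard_coe_finset] at this
  have h2 : E.card ≤ 4 * (2 ^ l - 1) + U * C := by
    refine le_trans (Finset.card_union_le _ _) ?_
    have hb : ((Finset.range l).biUnion (fun j => blk j 4 (2 ^ j))).card
        ≤ ∑ j ∈ Finset.range l, 4 * 2 ^ j := by
      refine le_trans Finset.card_biUnion_le (Finset.sum_le_sum fun j _ => blk_card j 4 (2 ^ j))
    have hsum : ∑ j ∈ Finset.range l, 4 * 2 ^ j = 4 * (2 ^ l - 1) := by
      rw [← Finset.mul_sum]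
      have := sum2 l
      omega
    have := blk_card l U C
    omega
  omega

theorem stmt_5 (m : ℕ) (hm : m ∈ A) :
    (cnt A m : ℝ) < 4 * Real.sqrt m := by
  obtain ⟨l, hml⟩ := Set.mem_iUnion.mp hm
  obtain ⟨u, c, hu1, hu4, hc, hmeq⟩ := T_elim hml
  set P := ∑ i ∈ Finset.range l, 4 ^ i with hPdef
  have hP : 3 * P + 1 = 4 ^ l := sum4 l
  have hX : 2 ^ l * 2 ^ l = 4 ^ l := by rw [← mul_pow]; norm_num
  have hS2 := sum2 l
  have hsprd_le_P : ∀ d, d + 1 ≤ 2 ^ l → sprd d ≤ P := by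
    intro d hd
    have htop : sprd (∑ i ∈ Finset.range l, 2 ^ i) = P := by
      have := sprd_bits l (fun _ => 1) (fun i _ => le_refl 1)
      simpa using this
    have := sprd_le (show d ≤ ∑ i ∈ Finset.range l, 2 ^ i by omega)
    omega
  have hFc : sprd c ≤ P := hsprd_le_P c hc
  have hhigh : ∀ j, l < j → ∀ x ∈ T j, m < x := by
    intro j hj x hx
    obtain ⟨u', c', h1', h4', hc', rfl⟩ := T_elim hx
    have h4j : 4 ^ (l + 1) ≤ 4 ^ j := Nat.pow_le_pow_right (by norm_num) hj
    have hPj : ∑ i ∈ Finset.range (l + 1), 4 ^ i ≤ ∑ i ∈ Finset.range j, 4 ^ i :=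
      Finset.sum_le_sum_of_subset (Finset.range_subset_range.mpr hj)
    have hPl1 : ∑ i ∈ Finset.range (l + 1), 4 ^ i = P + 4 ^ l := by
      rw [Finset.sum_range_succ]
    have hmul : 4 ^ j ≤ u' * 4 ^ j := Nat.le_mul_of_pos_left _ (by omega)
    have h4l1 : 4 ^ (l + 1) = 4 * 4 ^ l := by rw [pow_succ]; ring
    have hu4' : u * 4 ^ l ≤ 4 * 4 ^ l := Nat.mul_le_mul_right _ hu4
    omega
  have hX1 : 1 ≤ 2 ^ l := Nat.one_le_two_pow
  obtain ⟨Y, hY⟩ : ∃ Y, 2 ^ l = Y + 1 := ⟨2 ^ l - 1, by omega⟩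
  have h4Y : 4 ^ l = (Y + 1) * (Y + 1) := by rw [← hY, hX]
  have key : ∃ B : ℕ, cnt A m ≤ B ∧ B ^ 2 < 16 * m := by
    rcases Nat.lt_or_ge u 2 with hu2 | hu2
    · -- u = 1
      have hu : u = 1 := by omega
      subst hu
      refine ⟨4 * Y + (c + 1), ?_, ?_⟩
      · have htop : ∀ x ∈ T l, x ≤ m → x ∈ blk l 1 (c + 1) := by
          intro x hx hxle
          obtain ⟨u', c', h1', h4', hc', rfl⟩ := T_elim hx
          have hFc' : sprd c' ≤ P := hsprd_le_P c' hc'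
          have hu'1 : u' = 1 := by
            by_contra h
            have h2 : 2 ≤ u' := by omega
            have h24 : 2 * 4 ^ l ≤ u' * 4 ^ l := Nat.mul_le_mul_right _ h2
            omega
          subst hu'1
          have hcc : c' ≤ c := by
            by_contra h
            have := sprd_lt c' c (by omega)
            omega
          exact blk_mem (le_refl 1) (le_refl 1) (by omega)
        have := cnt_le_of m l 1 (c + 1) htop hhigh
        omega
      · have hcY : c ≤ Y := by omega
        have hL := sprd_lower c
        nlinarith [hL, hP, hmeq, h4Y, hcY]
    · -- 2 ≤ u ≤ 4
      refine ⟨4 * Y + u * (Y + 1), ?_, ?_⟩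
      · have htop : ∀ x ∈ T l, x ≤ m → x ∈ blk l u (2 ^ l) := by
          intro x hx hxle
          obtain ⟨u', c', h1', h4', hc', rfl⟩ := T_elim hx
          have hFc' : sprd c' ≤ P := hsprd_le_P c' hc'
          have hu'u : u' ≤ u := by
            by_contra h
            have h2 : u + 1 ≤ u' := by omega
            have h24 : (u + 1) * 4 ^ l ≤ u' * 4 ^ l := Nat.mul_le_mul_right _ h2
            have hexp : (u + 1) * 4 ^ l = u * 4 ^ l + 4 ^ l := by ring
            omega
          exact blk_mem h1' hu'u (by omega)
        have := cnt_le_of m l u (2 ^ l) htop hhigh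
        rw [hY] at this
        omega
      · have hm' : u * ((Y + 1) * (Y + 1)) + P ≤ m := by
          have : u * 4 ^ l = u * ((Y + 1) * (Y + 1)) := by rw [h4Y]
          omega
        interval_cases u <;> nlinarith [hm', hP, h4Y]
  obtain ⟨B, hB1, hB2⟩ := key
  have hkey : (cnt A m) ^ 2 < 16 * m := lt_of_le_of_lt (Nat.pow_le_pow_left hB1 2) hB2
  have h0 : (0 : ℝ) ≤ (cnt A m : ℝ) := Nat.cast_nonneg _
  have hlt : (cnt A m : ℝ) < Real.sqrt (16 * m) := by
    refine (Real.lt_sqrt h0).mpr ?_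
    exact_mod_cast hkey
  calc (cnt A m : ℝ) < Real.sqrt (16 * m) := hlt
    _ = 4 * Real.sqrt m := by
        rw [show (16 : ℝ) * m = (4 : ℝ) ^ 2 * m by norm_num, Real.sqrt_mul (by positivity),
          Real.sqrt_sq (by norm_num)]
end

section
/- Let T_l = { u·4^l + Σ_{i=0}^{l-1} v_i·4^i : u ∈ {1,2,3,4}, v_i ∈ {1,2} } and A = ⋃_{l≥0} T_l. For each fixed u ∈ {1,2,3,4}, setting q_{u,l} = u·4^l + Σ_{i=0}^{l-1} 2·4^i, one has lim_{l→∞} A(q_{u,l})/√(q_{u,l}) = (u+4)/√(u + 2/3), where A(n) denotes the number of elements of A that are at most n. -/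
/-! ### Auxiliary material -/

/-- `s4 l = ∑_{i<l} 4^i`. -/
def s4 (l : ℕ) : ℕ := ∑ i ∈ Finset.range l, 4 ^ i

lemma three_s4 (l : ℕ) : 3 * s4 l + 1 = 4 ^ l := by
  induction l with
  | zero => simp [s4]
  | succ n ih =>
    rw [s4, Finset.sum_range_succ, ← s4, pow_succ]
    omega

lemma s4_mono : Monotone s4 := fun a b hab =>
  Finset.sum_le_sum_of_subset (Finset.range_subset_range.2 hab)

lemma sum_pow_four_le {l : ℕ} {S : Finset ℕ} (h : S ⊆ Finset.range l) :
    ∑ i ∈ S, 4 ^ i ≤ s4 l :=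
  Finset.sum_le_sum_of_subset h

lemma sum_pow_four_inj : ∀ (l : ℕ) (S T : Finset ℕ), S ⊆ Finset.range l →
    T ⊆ Finset.range l → (∑ i ∈ S, 4 ^ i) = (∑ i ∈ T, 4 ^ i) → S = T := by
  intro l
  induction l with
  | zero =>
    intro S T hS hT _
    rw [Finset.range_zero, Finset.subset_empty] at hS hT
    rw [hS, hT]
  | succ n ih =>
    intro S T hS hT hsum
    have key : ∀ U : Finset ℕ, U ⊆ Finset.range (n + 1) →
        (∑ i ∈ U, 4 ^ i) = (if n ∈ U then 4 ^ n else 0) + ∑ i ∈ U.erase n, 4 ^ i := by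
      intro U _
      by_cases h : n ∈ U
      · rw [if_pos h, Finset.add_sum_erase _ _ h]
      · rw [if_neg h, Finset.erase_eq_of_notMem h, zero_add]
    have herase : ∀ U : Finset ℕ, U ⊆ Finset.range (n + 1) →
        U.erase n ⊆ Finset.range n := by
      intro U hU i hi
      have h1 := hU (Finset.mem_of_mem_erase hi)
      have h2 : i ≠ n := Finset.ne_of_mem_erase hi
      rw [Finset.mem_range] at h1 ⊢
      omega
    have hSb := sum_pow_four_le (herase S hS)
    have hTb := sum_pow_four_le (herase T hT)
    have h4 := three_s4 n
    rw [key S hS, key T hT] at hsum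
    by_cases hnS : n ∈ S <;> by_cases hnT : n ∈ T
    · rw [if_pos hnS, if_pos hnT] at hsum
      have := ih _ _ (herase S hS) (herase T hT) (by omega)
      ext i
      by_cases hi : i = n
      · subst hi; simp [hnS, hnT]
      · constructor <;> intro hmem
        · exact Finset.mem_of_mem_erase (this ▸ Finset.mem_erase.2 ⟨hi, hmem⟩)
        · exact Finset.mem_of_mem_erase (this ▸ Finset.mem_erase.2 ⟨hi, hmem⟩)
    · rw [if_pos hnS, if_neg hnT] at hsum; omega
    · rw [if_neg hnS, if_pos hnT] at hsum; omega
    · rw [if_neg hnS, if_neg hnT] at hsum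
      have := ih _ _ (herase S hS) (herase T hT) (by omega)
      rwa [Finset.erase_eq_of_notMem hnS, Finset.erase_eq_of_notMem hnT] at this

/-- uniqueness of quotient/remainder -/
lemma top_digit_eq {a x y r r' : ℕ} (hr : r < a) (hr' : r' < a)
    (h : x * a + r = y * a + r') : x = y ∧ r = r' := by
  rcases Nat.lt_trichotomy x y with hlt | heq | hgt
  · exfalso
    have : (x + 1) * a ≤ y * a := Nat.mul_le_mul_right a hlt
    rw [add_mul, one_mul] at this
    omega
  · constructor
    · exact heq
    · subst heq; omega
  · exfalso
    have : (y + 1) * a ≤ x * a := Nat.mul_le_mul_right a hgt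
    rw [add_mul, one_mul] at this
    omega

/-- The finite model for the part of `T l` with top digit at most `w`. -/
def Fp (l w : ℕ) : Finset ℕ :=
  ((Finset.Icc 1 w) ×ˢ (Finset.range l).powerset).image
    (fun p => p.1 * 4 ^ l + s4 l + ∑ i ∈ p.2, 4 ^ i)

lemma mem_Fp {l w n : ℕ} :
    n ∈ Fp l w ↔ ∃ u' S, 1 ≤ u' ∧ u' ≤ w ∧ S ⊆ Finset.range l ∧
      n = u' * 4 ^ l + s4 l + ∑ i ∈ S, 4 ^ i := by
  simp only [Fp, Finset.mem_image, Finset.mem_product, Finset.mem_Icc,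
    Finset.mem_powerset, Prod.exists]
  constructor
  · rintro ⟨a, b, ⟨⟨h1, h2⟩, h3⟩, rfl⟩
    exact ⟨a, b, h1, h2, h3, rfl⟩
  · rintro ⟨a, b, h1, h2, h3, rfl⟩
    exact ⟨a, b, ⟨⟨h1, h2⟩, h3⟩, rfl⟩

lemma Fp_bounds {l w n : ℕ} (hn : n ∈ Fp l w) :
    4 ^ l + s4 l ≤ n ∧ n ≤ w * 4 ^ l + 2 * s4 l := by
  rw [mem_Fp] at hn
  obtain ⟨u', S, h1, h2, h3, rfl⟩ := hn
  have hb := sum_pow_four_le h3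
  constructor
  · have : 1 * 4 ^ l ≤ u' * 4 ^ l := Nat.mul_le_mul_right _ h1
    omega
  · have : u' * 4 ^ l ≤ w * 4 ^ l := Nat.mul_le_mul_right _ h2
    omega

lemma Fp_card (l w : ℕ) : (Fp l w).card = w * 2 ^ l := by
  rw [Fp, Finset.card_image_of_injOn, Finset.card_product, Nat.card_Icc,
    Finset.card_powerset, Finset.card_range]
  · simp
  · rintro ⟨a, b⟩ hab ⟨c, d⟩ hcd h
    simp only [Finset.mem_coe, Finset.mem_product, Finset.mem_Icc, Finset.mem_powerset] at hab hcd
    simp only at h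
    have h4 := three_s4 l
    have hb := sum_pow_four_le hab.2
    have hd := sum_pow_four_le hcd.2
    rw [add_assoc, add_assoc] at h
    have := top_digit_eq (a := 4 ^ l) (by omega) (by omega) h
    have hbd : b = d := sum_pow_four_inj l b d hab.2 hcd.2 (by omega)
    simp [this.1, hbd]

lemma T_eq_Fp (l : ℕ) : T l = ↑(Fp l 4) := by
  ext n
  simp only [T, Set.mem_setOf_eq, Finset.coe_sort_coe, Finset.mem_coe, mem_Fp]
  constructor
  · rintro ⟨u', ⟨h1, h2⟩, v, hv, rfl⟩
    refine ⟨u', (Finset.range l).filter (fun i => v i = 2), h1, h2,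
      Finset.filter_subset _ _, ?_⟩
    have : ∑ i ∈ Finset.range l, v i * 4 ^ i
        = ∑ i ∈ Finset.range l, (4 ^ i + if v i = 2 then 4 ^ i else 0) := by
      apply Finset.sum_congr rfl
      intro i hi
      rcases hv i (Finset.mem_range.1 hi) with h | h <;> simp [h, two_mul]
    rw [this, Finset.sum_add_distrib, ← s4, ← Finset.sum_filter]
    ring
  · rintro ⟨u', S, h1, h2, h3, rfl⟩
    refine ⟨u', ⟨h1, h2⟩, fun i => if i ∈ S then 2 else 1, fun i _ => ?_, ?_⟩
    · by_cases h : i ∈ S <;> simp [h]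
    · have hs : ∑ i ∈ Finset.range l, (if i ∈ S then 2 else 1) * 4 ^ i
          = s4 l + ∑ i ∈ S, 4 ^ i := by
        have h1 : ∑ i ∈ Finset.range l, (if i ∈ S then 2 else 1) * 4 ^ i
            = ∑ i ∈ Finset.range l, (4 ^ i + if i ∈ S then 4 ^ i else 0) := by
          apply Finset.sum_congr rfl
          intro i _
          by_cases h : i ∈ S <;> simp [h, two_mul]
        rw [h1, Finset.sum_add_distrib, ← s4, ← Finset.sum_filter,
          Finset.filter_mem_eq_inter, Finset.inter_eq_right.2 h3]
      rw [hs]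
      ring

lemma Fp_lt_Fp {j j' : ℕ} (h : j < j') {n m : ℕ} (hn : n ∈ Fp j 4) (hm : m ∈ Fp j' 4) :
    n < m := by
  have h1 := (Fp_bounds hn).2
  have h2 := (Fp_bounds hm).1
  have h3 := three_s4 j
  have hle : 4 ^ (j + 1) + s4 (j + 1) ≤ 4 ^ j' + s4 j' :=
    Nat.add_le_add (Nat.pow_le_pow_right (by norm_num) h) (s4_mono h)
  have hs : s4 (j + 1) = s4 j + 4 ^ j := Finset.sum_range_succ _ _
  have hp : (4 : ℕ) ^ (j + 1) = 4 * 4 ^ j := by rw [pow_succ]; ring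
  omega

lemma Fp_mono {l w w' : ℕ} (h : w ≤ w') : Fp l w ⊆ Fp l w' := by
  intro n hn
  rw [mem_Fp] at hn ⊢
  obtain ⟨u', S, h1, h2, h3, rfl⟩ := hn
  exact ⟨u', S, h1, h2.trans h, h3, rfl⟩

lemma sum_four_two_pow (l : ℕ) : ∑ j ∈ Finset.range l, 4 * 2 ^ j = 4 * (2 ^ l - 1) := by
  induction l with
  | zero => simp
  | succ n ih =>
    rw [Finset.sum_range_succ, ih, pow_succ]
    have : 1 ≤ 2 ^ n := Nat.one_le_two_pow
    omega

/-- The main counting identity. -/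
lemma cnt_eq_s12 (u : ℕ) (hu : 1 ≤ u ∧ u ≤ 4) (l : ℕ) :
    cnt A (u * 4 ^ l + 2 * s4 l) = (u + 4) * 2 ^ l - 4 := by
  set Q := u * 4 ^ l + 2 * s4 l with hQ
  set F : Finset ℕ := ((Finset.range l).biUnion (fun j => Fp j 4)) ∪ Fp l u with hF
  have hset : A ∩ Set.Iic Q = ↑F := by
    ext n
    simp only [A, Set.mem_inter_iff, Set.mem_iUnion, Set.mem_Iic, hF, Finset.coe_union,
      Set.mem_union, Finset.coe_biUnion, Finset.coe_sort_coe, Finset.mem_coe,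
      Finset.mem_range]
    constructor
    · rintro ⟨⟨j, hj⟩, hle⟩
      rw [T_eq_Fp] at hj
      rw [Finset.mem_coe] at hj
      rcases Nat.lt_trichotomy j l with h | h | h
      · exact Or.inl ⟨j, h, hj⟩
      · subst h
        right
        rw [mem_Fp] at hj ⊢
        obtain ⟨u', S, h1, h2, h3, rfl⟩ := hj
        refine ⟨u', S, h1, ?_, h3, rfl⟩
        by_contra hgt
        push_neg at hgt
        have h4 := three_s4 j
        have hb := sum_pow_four_le h3
        have : (u + 1) * 4 ^ j ≤ u' * 4 ^ j := Nat.mul_le_mul_right _ hgt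
        rw [add_mul, one_mul] at this
        omega
      · exfalso
        have h1 := (Fp_bounds hj).1
        have h2 := three_s4 l
        have hle2 : 4 ^ (l + 1) + s4 (l + 1) ≤ 4 ^ j + s4 j :=
          Nat.add_le_add (Nat.pow_le_pow_right (by norm_num) h) (s4_mono h)
        have hs : s4 (l + 1) = s4 l + 4 ^ l := Finset.sum_range_succ _ _
        have hp : (4 : ℕ) ^ (l + 1) = 4 * 4 ^ l := by rw [pow_succ]; ring
        have hu4 : u * 4 ^ l ≤ 4 * 4 ^ l := Nat.mul_le_mul_right _ hu.2
        omega
    · rintro (⟨j, hjl, hj⟩ | hj)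
      · constructor
        · exact ⟨j, by rw [T_eq_Fp]; exact hj⟩
        · have h1 := (Fp_bounds hj).2
          have hle2 : 4 ^ (j + 1) ≤ 4 ^ l := Nat.pow_le_pow_right (by norm_num) hjl
          have hsm : s4 j ≤ s4 l := s4_mono (le_of_lt hjl)
          have hp : (4 : ℕ) ^ (j + 1) = 4 * 4 ^ j := by rw [pow_succ]; ring
          have hu1 : 1 * 4 ^ l ≤ u * 4 ^ l := Nat.mul_le_mul_right _ hu.1
          omega
      · constructor
        · exact ⟨l, by rw [T_eq_Fp]; exact Finset.mem_coe.2 (Fp_mono hu.2 hj)⟩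
        · have h1 := (Fp_bounds hj).2
          rw [mem_Fp] at hj
          obtain ⟨u', S, h1', h2', h3', rfl⟩ := hj
          have hb := sum_pow_four_le h3'
          have : u' * 4 ^ l ≤ u * 4 ^ l := Nat.mul_le_mul_right _ h2'
          omega
  have hdisj : Disjoint ((Finset.range l).biUnion (fun j => Fp j 4)) (Fp l u) := by
    rw [Finset.disjoint_left]
    intro n hn hn'
    rw [Finset.mem_biUnion] at hn
    obtain ⟨j, hj, hjn⟩ := hn
    exact lt_irrefl n (Fp_lt_Fp (Finset.mem_range.1 hj) hjn (Fp_mono hu.2 hn'))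
  have hcard : F.card = (u + 4) * 2 ^ l - 4 := by
    rw [hF, Finset.card_union_of_disjoint hdisj, Finset.card_biUnion, Fp_card]
    · have hsum : ∑ j ∈ Finset.range l, (Fp j 4).card
          = ∑ j ∈ Finset.range l, 4 * 2 ^ j := by
        apply Finset.sum_congr rfl
        intro j _
        exact Fp_card j 4
      rw [hsum, sum_four_two_pow]
      have h1 : 1 ≤ 2 ^ l := Nat.one_le_two_pow
      have h2 : (u + 4) * 2 ^ l = u * 2 ^ l + 4 * 2 ^ l := by ring
      omega
    · intro x _ y _ hxy
      rw [Function.onFun, Finset.disjoint_left]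
      intro n hn hn'
      rcases Nat.lt_or_ge x y with h | h
      · exact lt_irrefl n (Fp_lt_Fp h hn hn')
      · have h' : y < x := lt_of_le_of_ne h (Ne.symm hxy)
        exact lt_irrefl n (Fp_lt_Fp h' hn' hn)
  rw [cnt, hset, Set.ncard_coe_finset, hcard]

theorem stmt_12 (u : ℕ) (hu : 1 ≤ u ∧ u ≤ 4)
    (q : ℕ → ℕ) (hq : ∀ l, q l = u * 4 ^ l + ∑ i ∈ Finset.range l, 2 * 4 ^ i) :
    Filter.Tendsto (fun l : ℕ => (cnt A (q l) : ℝ) / Real.sqrt (q l))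
      Filter.atTop (nhds (((u : ℝ) + 4) / Real.sqrt ((u : ℝ) + 2 / 3))) := by
  have hq' : ∀ l, q l = u * 4 ^ l + 2 * s4 l := by
    intro l
    rw [hq l, s4, Finset.mul_sum]
  have hcnt : ∀ l, cnt A (q l) = (u + 4) * 2 ^ l - 4 := by
    intro l
    rw [hq' l]
    exact cnt_eq_s12 u hu l
  -- real-valued formulas
  have hcntR : ∀ l, (cnt A (q l) : ℝ) = ((u : ℝ) + 4) * 2 ^ l - 4 := by
    intro l
    have h1 : (1 : ℕ) ≤ 2 ^ l := Nat.one_le_two_pow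
    have h4 : 4 ≤ (u + 4) * 2 ^ l := by nlinarith [hu.1]
    rw [hcnt l, Nat.cast_sub h4]
    push_cast
    ring
  have hqR : ∀ l, (q l : ℝ) = ((u : ℝ) + 2 / 3) * 4 ^ l - 2 / 3 := by
    intro l
    have h3 := three_s4 l
    rw [hq' l]
    have : (3 : ℝ) * s4 l + 1 = 4 ^ l := by exact_mod_cast congrArg (Nat.cast : ℕ → ℝ) h3
    push_cast
    linarith
  -- numerator and denominator scaled by 2^l
  have hnum : Filter.Tendsto (fun l : ℕ => (cnt A (q l) : ℝ) / 2 ^ l)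
      Filter.atTop (nhds ((u : ℝ) + 4)) := by
    have heq : ∀ l : ℕ, (cnt A (q l) : ℝ) / 2 ^ l = ((u : ℝ) + 4) - 4 * (1 / 2) ^ l := by
      intro l
      rw [hcntR l]
      have h2 : (2 : ℝ) ^ l ≠ 0 := by positivity
      field_simp
      have h' : (2 : ℝ) ^ l * (1 / 2) ^ l = 1 := by rw [← mul_pow]; norm_num
      linear_combination 4 * h'
    simp only [heq]
    have : Filter.Tendsto (fun l : ℕ => 4 * (1 / 2 : ℝ) ^ l) Filter.atTop (nhds (4 * 0)) :=
      (tendsto_pow_atTop_nhds_zero_of_lt_one (by norm_num) (by norm_num)).const_mul 4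
    simpa using (tendsto_const_nhds (x := (u : ℝ) + 4)).sub this
  have hden0 : Filter.Tendsto (fun l : ℕ => (q l : ℝ) / 4 ^ l)
      Filter.atTop (nhds ((u : ℝ) + 2 / 3)) := by
    have heq : ∀ l : ℕ, (q l : ℝ) / 4 ^ l = ((u : ℝ) + 2 / 3) - (2 / 3) * (1 / 4) ^ l := by
      intro l
      rw [hqR l]
      have h2 : (4 : ℝ) ^ l ≠ 0 := by positivity
      field_simp
      have h' : (1 / 4 : ℝ) ^ l * 4 ^ l = 1 := by rw [← mul_pow]; norm_num
      linear_combination 2 * h'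
    simp only [heq]
    have : Filter.Tendsto (fun l : ℕ => (2 / 3 : ℝ) * (1 / 4) ^ l) Filter.atTop
        (nhds ((2 / 3) * 0)) :=
      (tendsto_pow_atTop_nhds_zero_of_lt_one (by norm_num) (by norm_num)).const_mul _
    simpa using (tendsto_const_nhds (x := (u : ℝ) + 2 / 3)).sub this
  have hden : Filter.Tendsto (fun l : ℕ => Real.sqrt (q l) / 2 ^ l)
      Filter.atTop (nhds (Real.sqrt ((u : ℝ) + 2 / 3))) := by
    have heq : ∀ l : ℕ, Real.sqrt (q l) / 2 ^ l = Real.sqrt ((q l : ℝ) / 4 ^ l) := by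
      intro l
      have h24 : Real.sqrt ((4 : ℝ) ^ l) = 2 ^ l := by
        rw [show (4 : ℝ) ^ l = ((2 : ℝ) ^ l) ^ 2 by
          rw [← pow_mul, mul_comm, pow_mul]; norm_num]
        exact Real.sqrt_sq (by positivity)
      rw [Real.sqrt_div (Nat.cast_nonneg (q l)) ((4 : ℝ) ^ l), h24]
    simp only [heq]
    exact (Real.continuous_sqrt.tendsto _).comp hden0
  have hne : Real.sqrt ((u : ℝ) + 2 / 3) ≠ 0 := by
    have : (0 : ℝ) < (u : ℝ) + 2 / 3 := by positivity
    exact ne_of_gt (Real.sqrt_pos.2 this)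
  have := hnum.div hden hne
  apply this.congr
  intro l
  have h2 : (2 : ℝ) ^ l ≠ 0 := by positivity
  exact div_div_div_cancel_right₀ h2 _ _
end
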